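/- Let d ≥ 1, 0 < γ < d+1, 0 < s ≤ 1, ν > 0, let W^t ∈ ℝ, and let φ ≥ 0 satisfy φ − νW^t ≥ 0. Then for all Schwartz functions f, h on ℝ^d and every ξ ∈ ℝ^d, |e^{φ(1+|ξ|^s)} F(B^t(f,h))(ξ)| ≤ (2π)^{−d} C_𝗀 |𝓜| ∫_{ℝ^d} |ξ| |η|^{1−γ} |e^{φ(1+|ξ−η|^s)} f̂(ξ−η)| · |e^{φ(1+|η|^s)} ĥ(η)| dη. -/

import Mathlib

open MeasureTheory Real Set Filter
open scoped ENNReal RealInnerProductSpace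

noncomputable section

/-- Euclidean space ℝ^d. -/
abbrev Ed (d : ℕ) := EuclideanSpace ℝ (Fin d)

/-- Japanese bracket ⟨ξ⟩ = (1+|ξ|²)^{1/2}. -/
def jap {d : ℕ} (ξ : Ed d) : ℝ := (1 + ‖ξ‖ ^ 2) ^ ((1 : ℝ) / 2)

/-- Fourier–Lebesgue norm ‖⟨·⟩^κ F‖_{L^r}, with `F` the Fourier transform of the
distribution in question. -/
def flNorm (d : ℕ) (κ : ℝ) (r : ℝ≥0∞) (F : Ed d → ℂ) : ℝ≥0∞ :=
  eLpNorm (fun ξ => jap ξ ^ κ * ‖F ξ‖) r volume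

/-- Gevrey–Fourier–Lebesgue norm ‖e^{a(1+|ξ|^s)}⟨ξ⟩^{κs} F‖_{L^r} (Fourier side). -/
def gNorm (d : ℕ) (s a κ : ℝ) (r : ℝ≥0∞) (F : Ed d → ℂ) : ℝ≥0∞ :=
  eLpNorm (fun ξ => Real.exp (a * (1 + ‖ξ‖ ^ s)) * jap ξ ^ (κ * s) * ‖F ξ‖) r volume

/-- The two-tiered norm X_{a,γ}^{κ₁,κ₂,r₁,r₂}. -/
def xNorm (d : ℕ) (γ s a κ₁ κ₂ : ℝ) (r₁ r₂ : ℝ≥0∞) (F : Ed d → ℂ) : ℝ≥0∞ :=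
  if γ ≤ 1 then gNorm d s a κ₁ r₁ F else gNorm d s a κ₁ r₁ F + gNorm d s a κ₂ r₂ F

/-- The exponent 2q/(q-1) ∈ (2,∞], interpreted as ∞ when q = 1. -/
def qExp (q : ℝ) : ℝ≥0∞ := if q ≤ 1 then ∞ else ENNReal.ofReal (2 * q / (q - 1))

/-- Fourier side of the bilinear operator B^t. -/
def Bhat (d : ℕ) (s ν Wt : ℝ) (ghat : Ed d → ℂ) (M : Ed d →L[ℝ] Ed d)
    (F H : Ed d → ℂ) (ξ : Ed d) : ℂ :=
  -((((2 * Real.pi) ^ d)⁻¹ : ℝ) : ℂ) *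
    ∫ η : Ed d,
      ((Real.exp (-(ν * Wt * (‖ξ‖ ^ s - ‖ξ - η‖ ^ s - ‖η‖ ^ s - 1))) : ℝ) : ℂ) *
        ((inner ℝ ξ (M η) : ℝ) : ℂ) * ghat η * F (ξ - η) * H η

/-- `ghat` is the Fourier transform of an admissible interaction potential:
locally integrable with |ξ ĝ(ξ)| ≤ C_g |ξ|^{1-γ}. -/
def IsKernel (d : ℕ) (γ Cg : ℝ) (ghat : Ed d → ℂ) : Prop :=
  MeasureTheory.LocallyIntegrable ghat volume ∧
    ∀ ξ : Ed d, ξ ≠ 0 → ‖ξ‖ * ‖ghat ξ‖ ≤ Cg * ‖ξ‖ ^ (1 - γ)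

/-- A path in Ω_{α,β,ν}. -/
def IsPath (α β ν : ℝ) (W : ℝ → ℝ) : Prop :=
  ContinuousOn W (Ici 0) ∧ W 0 = 0 ∧ ∀ t ≥ (0 : ℝ), 0 ≤ α + β * t - ν * W t

/-- The heat-type multiplier symbol e^{-(tν²/2)(1+|ξ|^s)²}. -/
def heatMul (s ν t : ℝ) {d : ℕ} (ξ : Ed d) : ℝ :=
  Real.exp (-(t * ν ^ 2 / 2 * (1 + ‖ξ‖ ^ s) ^ 2))

/-- Mild solution on [0,T], formulated on the Fourier side: `μ t` is the Fourier
transform of the solution at time `t`, `μ0` that of the initial datum. -/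
def IsMildSol (d : ℕ) (s ν : ℝ) (ghat : Ed d → ℂ) (M : Ed d →L[ℝ] Ed d)
    (W : ℝ → ℝ) (T : ℝ) (μ0 : Ed d → ℂ) (μ : ℝ → Ed d → ℂ) : Prop :=
  ∀ t ∈ Icc (0 : ℝ) T, ∀ᵐ ξ : Ed d ∂volume, μ t ξ =
    (heatMul s ν t ξ : ℂ) * μ0 ξ -
      ∫ τ in Ioc (0 : ℝ) t,
        (heatMul s ν (t - τ) ξ : ℂ) * Bhat d s ν (W τ) ghat M (μ τ) (μ τ) ξ

/-- Continuity of a curve in the Fourier–Lebesgue norm Ŵ^{κ,r} on [0,T]. -/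
def FLContOn (d : ℕ) (κ : ℝ) (r : ℝ≥0∞) (T : ℝ) (μ : ℝ → Ed d → ℂ) : Prop :=
  ∀ t ∈ Icc (0 : ℝ) T, Tendsto (fun τ => flNorm d κ r (fun ξ => μ τ ξ - μ t ξ))
    (nhdsWithin t (Icc 0 T)) (nhds 0)

/-- The norm ‖μ‖_{C_T⁰ G_φ^{κ,r}} with φ^t = α + βt. -/
def gSup (d : ℕ) (s α β κ : ℝ) (r : ℝ≥0∞) (T : ℝ) (μ : ℝ → Ed d → ℂ) : ℝ≥0∞ :=
  ⨆ t ∈ Icc (0 : ℝ) T, gNorm d s (α + β * t) κ r (μ t)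

/-- The norm ‖μ‖_{C_T⁰ X_{φ,γ}^{κ₁,κ₂,r₁,r₂}} with φ^t = α + βt. -/
def xSup (d : ℕ) (γ s α β κ₁ κ₂ : ℝ) (r₁ r₂ : ℝ≥0∞) (T : ℝ) (μ : ℝ → Ed d → ℂ) : ℝ≥0∞ :=
  ⨆ t ∈ Icc (0 : ℝ) T, xNorm d γ s (α + β * t) κ₁ κ₂ r₁ r₂ (μ t)

/-- The Duhamel term ∫₀^t e^{-((t-τ)ν²/2)(1+|∇|^s)²} B^τ(μ₁^τ,μ₂^τ) dτ (Fourier side). -/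
def duhamel (d : ℕ) (s ν : ℝ) (ghat : Ed d → ℂ) (M : Ed d →L[ℝ] Ed d) (W : ℝ → ℝ)
    (μ₁ μ₂ : ℝ → Ed d → ℂ) (t : ℝ) (ξ : Ed d) : ℂ :=
  ∫ τ in Ioc (0 : ℝ) t,
    (heatMul s ν (t - τ) ξ : ℂ) * Bhat d s ν (W τ) ghat M (μ₁ τ) (μ₂ τ) ξ

/-- The Fourier transform with the convention f̂(ξ) = ∫ f(x) e^{-i x·ξ} dx. -/
def ft {d : ℕ} (f : Ed d → ℂ) (ξ : Ed d) : ℂ :=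
  ∫ x : Ed d, Complex.exp (-(Complex.I * ((inner ℝ x ξ : ℝ) : ℂ))) * f x

lemma rpow_sub_add (x y : ℝ) (hx : 0 ≤ x) (hy : 0 ≤ y) {s : ℝ} (hs0 : 0 < s) (hs1 : s ≤ 1) :
    (x + y) ^ s ≤ x ^ s + y ^ s := by
  have := NNReal.rpow_add_le_add_rpow (⟨x, hx⟩ : NNReal) ⟨y, hy⟩ hs0.le hs1
  have h2 := NNReal.coe_le_coe.2 this
  push_cast [NNReal.coe_rpow] at h2
  exact h2

/-- pointwise exponentially-weighted bound on the Fourier transform of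
B^t(f,h) in terms of the weighted Fourier transforms of f and h. -/
theorem stmt14 (d : ℕ) (hd : 1 ≤ d) (γ : ℝ) (hγ0 : 0 < γ) (hγd : γ < d + 1)
    (s : ℝ) (hs0 : 0 < s) (hs1 : s ≤ 1) (ν : ℝ) (hν : 0 < ν) (Wt φ : ℝ)
    (hφ0 : 0 ≤ φ) (hφ : 0 ≤ φ - ν * Wt)
    (Cg : ℝ) (hCg : 0 < Cg) (ghat : Ed d → ℂ) (hker : IsKernel d γ Cg ghat)
    (Mop : Ed d →L[ℝ] Ed d)
    (f h : SchwartzMap (Ed d) ℂ) (ξ : Ed d) :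
    ENNReal.ofReal
        (Real.exp (φ * (1 + ‖ξ‖ ^ s)) * ‖Bhat d s ν Wt ghat Mop (ft ⇑f) (ft ⇑h) ξ‖) ≤
      ENNReal.ofReal ((((2 * Real.pi) ^ d)⁻¹ : ℝ) * Cg * ‖Mop‖) *
        ∫⁻ η : Ed d,
          ENNReal.ofReal (‖ξ‖ * ‖η‖ ^ (1 - γ) *
            (Real.exp (φ * (1 + ‖ξ - η‖ ^ s)) * ‖ft (⇑f) (ξ - η)‖) *
            (Real.exp (φ * (1 + ‖η‖ ^ s)) * ‖ft (⇑h) η‖)) := by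
  set c : ℝ := (((2 * Real.pi) ^ d)⁻¹ : ℝ) with hc
  have hcpos : 0 ≤ c := by positivity
  set K : ℝ := Real.exp (φ * (1 + ‖ξ‖ ^ s)) with hK
  set G : Ed d → ℂ := fun η =>
      ((Real.exp (-(ν * Wt * (‖ξ‖ ^ s - ‖ξ - η‖ ^ s - ‖η‖ ^ s - 1))) : ℝ) : ℂ) *
        ((inner ℝ ξ (Mop η) : ℝ) : ℂ) * ghat η * ft (⇑f) (ξ - η) * ft (⇑h) η with hG
  have hBnorm : ‖Bhat d s ν Wt ghat Mop (ft ⇑f) (ft ⇑h) ξ‖ = c * ‖∫ η, G η‖ := by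
    rw [Bhat]
    rw [norm_mul, norm_neg, Complex.norm_real, Real.norm_eq_abs, abs_of_nonneg hcpos]
  -- step 1: bound by lintegral of norms
  have step1 : ENNReal.ofReal (K * ‖Bhat d s ν Wt ghat Mop (ft ⇑f) (ft ⇑h) ξ‖)
      ≤ ENNReal.ofReal c * ∫⁻ η, ENNReal.ofReal (K * ‖G η‖) := by
    rw [hBnorm, ← mul_assoc, mul_comm K c, mul_assoc,
      ENNReal.ofReal_mul hcpos]
    gcongr
    have h1 : ENNReal.ofReal ‖∫ η, G η‖ ≤ ∫⁻ η, ENNReal.ofReal ‖G η‖ := by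
      simp only [ofReal_norm_eq_enorm]
      exact enorm_integral_le_lintegral_enorm _
    calc ENNReal.ofReal (K * ‖∫ η, G η‖)
        = ENNReal.ofReal K * ENNReal.ofReal ‖∫ η, G η‖ :=
          ENNReal.ofReal_mul (Real.exp_nonneg _)
      _ ≤ ENNReal.ofReal K * ∫⁻ η, ENNReal.ofReal ‖G η‖ := by gcongr
      _ = ∫⁻ η, ENNReal.ofReal K * ENNReal.ofReal ‖G η‖ :=
          (lintegral_const_mul' _ _ (by simp)).symm
      _ = ∫⁻ η, ENNReal.ofReal (K * ‖G η‖) := by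
          exact lintegral_congr fun η => (ENNReal.ofReal_mul (Real.exp_nonneg _ : (0:ℝ) ≤ K)).symm
  refine step1.trans ?_
  rw [mul_assoc c, ENNReal.ofReal_mul hcpos, mul_assoc]
  refine mul_le_mul_right ?_ _
  rw [← lintegral_const_mul' _ _ ENNReal.ofReal_ne_top]
  -- a.e. pointwise bound
  haveI : Nonempty (Fin d) := Fin.pos_iff_nonempty.mp hd
  have h0 : ∀ᵐ η : Ed d ∂volume, η ≠ 0 := by
    refine ae_iff.2 ?_
    have : {η : Ed d | ¬ η ≠ 0} = {0} := by ext η; simp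
    rw [this]; exact measure_singleton 0
  refine lintegral_mono_ae ?_
  filter_upwards [h0] with η hη
  rw [← ENNReal.ofReal_mul (by positivity)]
  refine ENNReal.ofReal_le_ofReal ?_
  have hnormG : ‖G η‖ =
      Real.exp (-(ν * Wt * (‖ξ‖ ^ s - ‖ξ - η‖ ^ s - ‖η‖ ^ s - 1))) *
        |(inner ℝ ξ (Mop η) : ℝ)| * ‖ghat η‖ * ‖ft (⇑f) (ξ - η)‖ * ‖ft (⇑h) η‖ := by
    rw [hG]
    simp only [norm_mul, Complex.norm_real, Real.norm_eq_abs, Real.abs_exp]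
  rw [hnormG]
  -- exponent inequality
  have hsub : ‖ξ‖ ^ s ≤ ‖ξ - η‖ ^ s + ‖η‖ ^ s := by
    have h1 : ‖ξ‖ ≤ ‖ξ - η‖ + ‖η‖ := by
      calc ‖ξ‖ = ‖(ξ - η) + η‖ := by rw [sub_add_cancel]
        _ ≤ ‖ξ - η‖ + ‖η‖ := norm_add_le _ _
    calc ‖ξ‖ ^ s ≤ (‖ξ - η‖ + ‖η‖) ^ s :=
          Real.rpow_le_rpow (norm_nonneg _) h1 hs0.le
      _ ≤ ‖ξ - η‖ ^ s + ‖η‖ ^ s :=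
          rpow_sub_add _ _ (norm_nonneg _) (norm_nonneg _) hs0 hs1
  have hexp : K * Real.exp (-(ν * Wt * (‖ξ‖ ^ s - ‖ξ - η‖ ^ s - ‖η‖ ^ s - 1)))
      ≤ Real.exp (φ * (1 + ‖ξ - η‖ ^ s)) * Real.exp (φ * (1 + ‖η‖ ^ s)) := by
    rw [hK, ← Real.exp_add, ← Real.exp_add]
    apply Real.exp_le_exp.2
    nlinarith [hφ, hsub]
  have hinner : |(inner ℝ ξ (Mop η) : ℝ)| ≤ ‖ξ‖ * (‖Mop‖ * ‖η‖) := by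
    refine (abs_real_inner_le_norm _ _).trans ?_
    gcongr
    exact Mop.le_opNorm η
  have hghat : ‖η‖ * ‖ghat η‖ ≤ Cg * ‖η‖ ^ (1 - γ) := hker.2 η hη
  -- combine
  have h2 : |(inner ℝ ξ (Mop η) : ℝ)| * ‖ghat η‖
      ≤ ‖ξ‖ * ‖Mop‖ * (Cg * ‖η‖ ^ (1 - γ)) := by
    calc |(inner ℝ ξ (Mop η) : ℝ)| * ‖ghat η‖
        ≤ (‖ξ‖ * (‖Mop‖ * ‖η‖)) * ‖ghat η‖ :=
          mul_le_mul_of_nonneg_right hinner (norm_nonneg _)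
      _ = ‖ξ‖ * ‖Mop‖ * (‖η‖ * ‖ghat η‖) := by ring
      _ ≤ ‖ξ‖ * ‖Mop‖ * (Cg * ‖η‖ ^ (1 - γ)) := by
          refine mul_le_mul_of_nonneg_left hghat (by positivity)
  have step : (K * Real.exp (-(ν * Wt * (‖ξ‖ ^ s - ‖ξ - η‖ ^ s - ‖η‖ ^ s - 1)))) *
      (|(inner ℝ ξ (Mop η) : ℝ)| * ‖ghat η‖)
      ≤ (Real.exp (φ * (1 + ‖ξ - η‖ ^ s)) * Real.exp (φ * (1 + ‖η‖ ^ s))) *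
        (‖ξ‖ * ‖Mop‖ * (Cg * ‖η‖ ^ (1 - γ))) :=
    mul_le_mul hexp h2 (by positivity) (by positivity)
  calc K * (Real.exp (-(ν * Wt * (‖ξ‖ ^ s - ‖ξ - η‖ ^ s - ‖η‖ ^ s - 1))) *
        |(inner ℝ ξ (Mop η) : ℝ)| * ‖ghat η‖ * ‖ft (⇑f) (ξ - η)‖ * ‖ft (⇑h) η‖)
      = ((K * Real.exp (-(ν * Wt * (‖ξ‖ ^ s - ‖ξ - η‖ ^ s - ‖η‖ ^ s - 1)))) *
          (|(inner ℝ ξ (Mop η) : ℝ)| * ‖ghat η‖)) * (‖ft (⇑f) (ξ - η)‖ * ‖ft (⇑h) η‖) := by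
        ring
    _ ≤ ((Real.exp (φ * (1 + ‖ξ - η‖ ^ s)) * Real.exp (φ * (1 + ‖η‖ ^ s))) *
          (‖ξ‖ * ‖Mop‖ * (Cg * ‖η‖ ^ (1 - γ)))) * (‖ft (⇑f) (ξ - η)‖ * ‖ft (⇑h) η‖) :=
        mul_le_mul_of_nonneg_right step (by positivity)
    _ = Cg * ‖Mop‖ *
        (‖ξ‖ * ‖η‖ ^ (1 - γ) * (Real.exp (φ * (1 + ‖ξ - η‖ ^ s)) * ‖ft (⇑f) (ξ - η)‖) *
          (Real.exp (φ * (1 + ‖η‖ ^ s)) * ‖ft (⇑h) η‖)) := by ring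

end
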